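/- Let V_k be a finite set of n_k examples and S_k ⊆ V_k a subset of size r_k. If f is L-Lipschitz and for each i define a_i = E_{x₁,x₂∈A(x_i)} ‖f(x₁) − f(x₂)‖, then (1/n_k) Σ_{i∈V_k} a_i ≤ (1/n_k) ( Σ_{i∈S_k} a_i + 2L Σ_{i∈V_k∖S_k} min_{j∈S_k} d_{i,j} ), where d_{i,j} = E_{x∈A(x_i), x'∈A(x_j)} ‖x − x'‖ is the expected augmentation distance. -/

import Mathlib

open Finset

lemma key_align_bound {X H : Type*} [NormedAddCommGroup X] [NormedAddCommGroup H]
    (f : X → H) (L : ℝ) (hL : ∀ x x' : X, ‖f x - f x'‖ ≤ L * ‖x - x'‖)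
    (Ai Aj : Finset X) (hi : Ai.Nonempty) (hj : Aj.Nonempty) :
    ((Ai.card : ℝ) * Ai.card)⁻¹ * ∑ x1 ∈ Ai, ∑ x2 ∈ Ai, ‖f x1 - f x2‖ ≤
      2 * L * (((Ai.card : ℝ) * (Aj.card : ℝ))⁻¹ * ∑ x ∈ Ai, ∑ x' ∈ Aj, ‖x - x'‖) := by
  have hm : (0 : ℝ) < Ai.card := by exact_mod_cast Finset.card_pos.2 hi
  have hn : (0 : ℝ) < Aj.card := by exact_mod_cast Finset.card_pos.2 hj
  set m : ℝ := (Ai.card : ℝ)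
  set n : ℝ := (Aj.card : ℝ)
  set S : ℝ := ∑ x ∈ Ai, ∑ x' ∈ Aj, ‖x - x'‖ with hS
  -- pointwise bound summed over x' ∈ Aj
  have hpt : ∀ x1 ∈ Ai, ∀ x2 ∈ Ai,
      n * ‖f x1 - f x2‖ ≤ ∑ x' ∈ Aj, (L * ‖x1 - x'‖ + L * ‖x2 - x'‖) := by
    intro x1 _ x2 _
    have : n * ‖f x1 - f x2‖ = ∑ _x' ∈ Aj, ‖f x1 - f x2‖ := by
      rw [Finset.sum_const, nsmul_eq_mul]
    rw [this]
    apply Finset.sum_le_sum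
    intro x' _
    calc ‖f x1 - f x2‖ = ‖(f x1 - f x') + (f x' - f x2)‖ := by rw [sub_add_sub_cancel]
      _ ≤ ‖f x1 - f x'‖ + ‖f x' - f x2‖ := norm_add_le _ _
      _ ≤ L * ‖x1 - x'‖ + L * ‖x' - x2‖ := add_le_add (hL x1 x') (hL x' x2)
      _ = L * ‖x1 - x'‖ + L * ‖x2 - x'‖ := by rw [norm_sub_rev x' x2]
  have hsum : n * ∑ x1 ∈ Ai, ∑ x2 ∈ Ai, ‖f x1 - f x2‖ ≤ 2 * m * L * S := by
    have h1 : n * ∑ x1 ∈ Ai, ∑ x2 ∈ Ai, ‖f x1 - f x2‖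
        = ∑ x1 ∈ Ai, ∑ x2 ∈ Ai, n * ‖f x1 - f x2‖ := by
      rw [Finset.mul_sum]; congr 1; ext x1; rw [Finset.mul_sum]
    rw [h1]
    calc ∑ x1 ∈ Ai, ∑ x2 ∈ Ai, n * ‖f x1 - f x2‖
        ≤ ∑ x1 ∈ Ai, ∑ x2 ∈ Ai, ∑ x' ∈ Aj, (L * ‖x1 - x'‖ + L * ‖x2 - x'‖) := by
          apply Finset.sum_le_sum; intro x1 hx1
          apply Finset.sum_le_sum; intro x2 hx2
          exact hpt x1 hx1 x2 hx2
      _ = 2 * m * L * S := by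
          simp only [Finset.sum_add_distrib, ← Finset.mul_sum, Finset.sum_const,
            nsmul_eq_mul]
          rw [hS]
          push_cast
          ring_nf
          simp only [m]
          ring
  -- conclude
  have key : ((m * m)⁻¹ : ℝ) * ∑ x1 ∈ Ai, ∑ x2 ∈ Ai, ‖f x1 - f x2‖
      ≤ (m * m)⁻¹ * (n⁻¹ * (2 * m * L * S)) := by
    apply mul_le_mul_of_nonneg_left _ (by positivity)
    rw [← div_eq_inv_mul, le_div_iff₀ hn, mul_comm]
    exact hsum
  refine key.trans_eq ?_
  field_simp

/-- bound on the average alignment in class `V_k` in terms of the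
alignment on a subset `S_k` plus `2L` times the minimum expected augmentation
distances to the subset. -/
theorem avg_alignment_le_subset_alignment_add_min_dist
    {X H ι : Type*} [DecidableEq ι] [NormedAddCommGroup X] [NormedAddCommGroup H]
    (f : X → H) (L : ℝ) (hL : ∀ x x' : X, ‖f x - f x'‖ ≤ L * ‖x - x'‖)
    (xex : ι → X) (A : ι → Finset X) (hA : ∀ i, (A i).Nonempty)
    (Vk Sk : Finset ι) (hSV : Sk ⊆ Vk) (hSk : Sk.Nonempty)
    (a : ι → ℝ)
    (ha : ∀ i, a i = (((A i).card : ℝ) * (A i).card)⁻¹ *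
        ∑ x1 ∈ A i, ∑ x2 ∈ A i, ‖f x1 - f x2‖)
    (d : ι → ι → ℝ)
    (hd : ∀ i j, d i j = (((A i).card : ℝ) * ((A j).card : ℝ))⁻¹ *
        ∑ x ∈ A i, ∑ x' ∈ A j, ‖x - x'‖) :
    (Vk.card : ℝ)⁻¹ * ∑ i ∈ Vk, a i ≤
      (Vk.card : ℝ)⁻¹ *
        (∑ i ∈ Sk, a i +
          2 * L * ∑ i ∈ Vk \ Sk, Sk.inf' hSk (fun j => d i j)) := by
  apply mul_le_mul_of_nonneg_left _ (by positivity)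
  rw [← Finset.sum_sdiff hSV, add_comm]
  apply add_le_add le_rfl
  rw [Finset.mul_sum]
  apply Finset.sum_le_sum
  intro i _
  obtain ⟨j, hjS, hjeq⟩ := Finset.exists_mem_eq_inf' hSk (fun j => d i j)
  rw [hjeq, ha i, hd i j]
  exact key_align_bound f L hL (A i) (A j) (hA i) (hA j)
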